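/- For every n ≥ 3, the cardinalities satisfy |Z_n| = |Z_{n−1}| + |Z_{n−2}|. -/

import Mathlib

open MvPolynomial

/-- Index type for the Plücker variables `P_J`: nonempty proper subsets of `{1,…,n}`
(encoded as `Fin n`, where `i : Fin n` stands for the value `i+1`). -/
abbrev PIdx (n : ℕ) := {J : Finset (Fin n) // J.Nonempty ∧ J ≠ Finset.univ}

/-- The transposition (1 2) acting on (1-based) row indices. -/
def swap12 (r : ℕ) : ℕ := if r = 1 then 2 else if r = 2 then 1 else r

/-- The image of the Plücker variable `P_J` under the monomial map `φ_ℓ` associated to the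
block diagonal matching field `B_ℓ`: writing `J = {j_1 < … < j_k}` (as 1-based values),
it is `sgn(σ)·x_{σ(1),j_1}⋯x_{σ(k),j_k}` where `σ = id` if `|J| = 1` or
`|J ∩ {1,…,ℓ}| ≥ 2`, and `σ = (1 2)` otherwise. Variables `x_{i,j}` are indexed by
pairs of 1-based natural numbers. -/
noncomputable def phiVal (K : Type*) [CommRing K] (n ℓ : ℕ) (J : Finset (Fin n)) :
    MvPolynomial (ℕ × ℕ) K :=
  let l : List ℕ := (J.sort (· ≤ ·)).map (fun j => (j : ℕ) + 1)
  if J.card = 1 ∨ 2 ≤ (J.filter (fun j : Fin n => (j : ℕ) + 1 ≤ ℓ)).card then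
    ((List.range l.length).map
      (fun r => (X (r + 1, l.getD r 0) : MvPolynomial (ℕ × ℕ) K))).prod
  else
    - ((List.range l.length).map
      (fun r => (X (swap12 (r + 1), l.getD r 0) : MvPolynomial (ℕ × ℕ) K))).prod

/-- The monomial map `φ_ℓ : K[P_J] → K[x_{i,j}]`. -/
noncomputable def phiMap (K : Type*) [CommRing K] (n ℓ : ℕ) :
    MvPolynomial (PIdx n) K →ₐ[K] MvPolynomial (ℕ × ℕ) K :=
  aeval (fun J => phiVal K n ℓ J.1)

/-- The matching field ideal `F_{n,ℓ} = ker φ_ℓ`. -/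
noncomputable def Fnl (K : Type*) [CommRing K] (n ℓ : ℕ) :
    Ideal (MvPolynomial (PIdx n) K) :=
  RingHom.ker (phiMap K n ℓ)

/-- Componentwise comparison `A ≤ B` of two finsets via their increasing enumerations. -/
def finsetLE {n : ℕ} (A B : Finset (Fin n)) : Prop :=
  List.Forall₂ (· ≤ ·) (A.sort (· ≤ ·)) (B.sort (· ≤ ·))

/-- The set `{w_1, …, w_k}` of the first `k` values of the one-line notation of `w`. -/
def initSet {n : ℕ} (w : Equiv.Perm (Fin n)) (k : ℕ) : Finset (Fin n) :=
  (Finset.univ.filter (fun i : Fin n => (i : ℕ) < k)).image w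

/-- `S_w`: the set of subsets `J` with `J ≰ {w_1,…,w_{|J|}}`. -/
def Sw {n : ℕ} (w : Equiv.Perm (Fin n)) : Set (Finset (Fin n)) :=
  {J | ¬ finsetLE J (initSet w J.card)}

/-- Index type for the Plücker variables that do not vanish on the Schubert variety `X(w)`. -/
abbrev RIdx (n : ℕ) (w : Equiv.Perm (Fin n)) := {J : PIdx n // J.1 ∉ Sw w}

open Classical in
/-- The projection `π_w` sending `P_J ↦ 0` for `J ∈ S_w` and `P_J ↦ P_J` otherwise. -/
noncomputable def piw (K : Type*) [CommRing K] {n : ℕ} (w : Equiv.Perm (Fin n)) :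
    MvPolynomial (PIdx n) K →ₐ[K] MvPolynomial (RIdx n w) K :=
  aeval (fun J => if h : J.1 ∈ Sw w then 0 else X (⟨J, h⟩ : RIdx n w))

/-- The restricted matching field ideal `F_{n,ℓ,w} = π_w(F_{n,ℓ})`. -/
noncomputable def Fnlw (K : Type*) [CommRing K] (n ℓ : ℕ) (w : Equiv.Perm (Fin n)) :
    Ideal (MvPolynomial (RIdx n w) K) :=
  Ideal.map (piw K w) (Fnl K n ℓ)

/-- An ideal of a polynomial ring is monomial-free if it contains no (nonzero) monomial. -/
def MonomialFree {σ K : Type*} [CommSemiring K] (I : Ideal (MvPolynomial σ K)) : Prop :=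
  ∀ m : σ →₀ ℕ, (monomial m (1 : K)) ∉ I

/-- The adjacent transposition `s_{i+1} = (i+1, i+2)` (1-based), i.e. the swap of the
0-based positions `i` and `i+1` of `Fin n`. -/
def adjT (n i : ℕ) : Equiv.Perm (Fin n) :=
  if h : i + 1 < n then Equiv.swap ⟨i, Nat.lt_of_succ_lt h⟩ ⟨i + 1, h⟩ else 1

/-- `Z_n`: permutations that are products of adjacent transpositions with pairwise
distance at least 2 between the indices. -/
def Zset (n : ℕ) : Set (Equiv.Perm (Fin n)) :=
  {w | ∃ l : List ℕ, (∀ i ∈ l, i + 1 < n) ∧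
        l.Pairwise (fun i j => i + 2 ≤ j ∨ j + 2 ≤ i) ∧
        w = (l.map (adjT n)).prod}

/-- `oneLine w i = w_i` : the `i`-th entry (1-based, with 1-based values) of the
one-line notation of `w`. -/
def oneLine {n : ℕ} (w : Equiv.Perm (Fin n)) (i : ℕ) : ℕ :=
  if h : i - 1 < n then (w ⟨i - 1, h⟩ : ℕ) + 1 else 0

/-- The (1-based) position `t` with `w_t = n`. -/
def posOfTop {n : ℕ} (w : Equiv.Perm (Fin n)) : ℕ :=
  if h : 0 < n then ((w.symm ⟨n - 1, by omega⟩ : ℕ) + 1) else 0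

/-- `deleteTop w u` holds iff `u = ul(w)` is obtained from `w` by deleting the entry `n`
from its one-line notation. -/
def deleteTop {n : ℕ} (w : Equiv.Perm (Fin n)) (u : Equiv.Perm (Fin (n - 1))) : Prop :=
  ∀ i, 1 ≤ i → i ≤ n - 1 →
    oneLine u i = if i < posOfTop w then oneLine w i else oneLine w (i + 1)

/-- The descending property: writing `w_t = n`, one has `w_t > w_{t+1} > … > w_n`. -/
def descendingProp {n : ℕ} (w : Equiv.Perm (Fin n)) : Prop :=
  ∀ i, posOfTop w ≤ i → i < n → oneLine w (i + 1) < oneLine w i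

/-- `T_{n,ℓ}`: the set of permutations `w` for which `F_{n,ℓ,w}` is nonzero and
monomial-free. -/
def Tset (K : Type*) [Field K] (n ℓ : ℕ) : Set (Equiv.Perm (Fin n)) :=
  {w | Fnlw K n ℓ w ≠ ⊥ ∧ MonomialFree (Fnlw K n ℓ w)}

/-- The one-line notation of `w` as a list of 1-based values. -/
def olList {n : ℕ} (w : Equiv.Perm (Fin n)) : List ℕ :=
  (List.finRange n).map (fun i => (w i : ℕ) + 1)

/-- A list of naturals is 312-free if it has no subsequence of type 312. -/
def List312Free (l : List ℕ) : Prop :=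
  ¬ ∃ i j k : ℕ, i < j ∧ j < k ∧ k < l.length ∧
      l.getD j 0 < l.getD k 0 ∧ l.getD k 0 < l.getD i 0

/-- The decreasing list `[a, a-1, …, 1]`. -/
def descTo1 (a : ℕ) : List ℕ := (List.range a).reverse.map (· + 1)

/-- The set `P_ℓ ⊆ S_n`. -/
def Pset (n ℓ : ℕ) : Set (Equiv.Perm (Fin n)) :=
  if ℓ = n then {w | List312Free (olList w)}
  else
    {w | (¬ List312Free (olList w) →
            oneLine w 2 = ℓ ∧ oneLine w 2 < oneLine w 1 ∧
            List312Free ((olList w).erase ℓ)) ∧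
         (∀ m, 3 ≤ m → m ≤ n →
            (olList w).filter (fun v => v ≤ m) = (m - 1) :: m :: descTo1 (m - 2) →
            oneLine w 1 < oneLine w 2 ∧ oneLine w 2 ≤ ℓ ∧
            (olList w).filter (fun v => v ≤ oneLine w 2) =
              oneLine w 1 :: oneLine w 2 ::
                ((descTo1 (oneLine w 2 - 1)).filter (fun v => v ≠ oneLine w 1)))}

/-- The set `A_1`. -/
def A1set (n : ℕ) : Set (Equiv.Perm (Fin n)) :=
  {w | (∃ u : Equiv.Perm (Fin (n - 1)), deleteTop w u ∧ u ∈ Zset (n - 1)) ∧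
       oneLine w n = n - 2 ∧
       ({oneLine w (n - 2), oneLine w (n - 1)} : Set ℕ) = {n - 1, n}}

/-- The set `A_2` (with `ul(w) ∈ T_{n-1,ℓ'}`). -/
def A2set (K : Type*) [Field K] (n ℓ' : ℕ) : Set (Equiv.Perm (Fin n)) :=
  {w | (∃ u : Equiv.Perm (Fin (n - 1)),
          deleteTop w u ∧ u ∈ Tset K (n - 1) ℓ' ∧ descendingProp u) ∧
       (∀ s t, 1 ≤ s → s ≤ n → 1 ≤ t → t ≤ n →
          oneLine w s = n - 1 → oneLine w t = n → s - 1 ≤ t)}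

def fval (l : List ℕ) (k : ℕ) : ℕ :=
  if k ∈ l then k + 1 else if k ≠ 0 ∧ k - 1 ∈ l then k - 1 else k

lemma adjT_apply (n a : ℕ) (ha : a + 1 < n) (k : Fin n) :
    ((adjT n a) k : ℕ) = if (k : ℕ) = a then a + 1 else if (k : ℕ) = a + 1 then a else k := by
  simp only [adjT, dif_pos ha, Equiv.swap_apply_def]
  split_ifs with h1 h2 h3 h4 h5 <;>
    simp_all [Fin.ext_iff] <;> omega

lemma adjT_prod_apply (n : ℕ) (l : List ℕ) (h1 : ∀ i ∈ l, i + 1 < n)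
    (h2 : l.Pairwise (fun i j => i + 2 ≤ j ∨ j + 2 ≤ i)) (k : Fin n) :
    (((l.map (adjT n)).prod) k : ℕ) = fval l (k : ℕ) := by
  induction l with
  | nil => simp [fval]
  | cons a t ih =>
    have hfar : ∀ j ∈ t, a + 2 ≤ j ∨ j + 2 ≤ a := by
      intro j hj; exact (List.pairwise_cons.mp h2).1 j hj
    have ht2 := (List.pairwise_cons.mp h2).2
    have ht1 : ∀ i ∈ t, i + 1 < n := fun i hi => h1 i (List.mem_cons_of_mem _ hi)
    have ha : a + 1 < n := h1 a ((List.mem_cons_self (a := a) (l := t)))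
    have hna : a ∉ t := fun h => by have := hfar a h; omega
    have hna1 : a + 1 ∉ t := fun h => by have := hfar _ h; omega
    have hna3 : ∀ j ∈ t, j + 1 ≠ a := fun j hj => by have := hfar j hj; omega
    have key : (((a :: t).map (adjT n)).prod) k = (adjT n a) (((t.map (adjT n)).prod) k) := by
      simp [List.prod_cons]
    rw [key, adjT_apply n a ha]
    have hm := ih ht1 ht2
    rw [hm]
    by_cases hka : (k : ℕ) = a
    · have : fval t (k : ℕ) = (k : ℕ) := by
        simp only [fval]
        rw [if_neg (by rw [hka]; exact hna)]
        split_ifs with h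
        · exfalso; obtain ⟨h0, hmem⟩ := h
          exact hna3 _ hmem (by omega)
        · rfl
      rw [this, if_pos hka]
      simp [fval, hka]
    · by_cases hka1 : (k : ℕ) = a + 1
      · have hft : fval t (k : ℕ) = (k : ℕ) := by
          simp only [fval]
          rw [if_neg (by rw [hka1]; exact hna1)]
          split_ifs with h
          · exfalso; obtain ⟨h0, hmem⟩ := h
            have he : (k : ℕ) - 1 = a := by omega
            rw [he] at hmem; exact hna hmem
          · rfl
        rw [hft, if_neg hka, if_pos hka1]
        simp only [fval, List.mem_cons]
        rw [if_neg (by push_neg; exact ⟨hka, by rw [hka1]; exact hna1⟩)]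
        rw [if_pos ⟨by omega, Or.inl (by omega)⟩]
        omega
      · have hne1 : fval t (k : ℕ) ≠ a := by
          simp only [fval]
          split_ifs with h h'
          · intro he; exact hna3 _ h he
          · intro he; apply hna; rw [← he]; exact h'.2
          · exact hka
        have hne2 : fval t (k : ℕ) ≠ a + 1 := by
          simp only [fval]
          split_ifs with h h'
          · intro he; apply hka; omega
          · intro he; apply hna1; rw [← he]; exact h'.2
          · exact hka1
        rw [if_neg hne1, if_neg hne2]
        have e1 : ((k : ℕ) = a ∨ (k : ℕ) ∈ t) ↔ (k : ℕ) ∈ t := or_iff_right hka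
        have e2 : (¬(k : ℕ) = 0 ∧ ((k : ℕ) - 1 = a ∨ (k : ℕ) - 1 ∈ t)) ↔
            (¬(k : ℕ) = 0 ∧ (k : ℕ) - 1 ∈ t) := by
          constructor
          · rintro ⟨h0, h | h⟩
            · exact absurd (by omega : (k : ℕ) = a + 1) hka1
            · exact ⟨h0, h⟩
          · rintro ⟨h0, h⟩
            exact ⟨h0, Or.inr h⟩
        simp only [fval, List.mem_cons, ne_eq]
        rw [if_congr e1 rfl rfl, if_congr e2 rfl rfl]

lemma fval_congr (l l' : List ℕ) (h : ∀ x, x ∈ l ↔ x ∈ l') (k : ℕ) :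
    fval l k = fval l' k := by
  simp only [fval]
  rw [if_congr (h k) rfl (if_congr (and_congr_right fun _ => h (k - 1)) rfl rfl)]

def gfree (m : ℕ) : Finset (Finset ℕ) :=
  (Finset.range m).powerset.filter (fun S => ∀ i ∈ S, i + 1 ∉ S)

noncomputable def Fperm (n : ℕ) (S : Finset ℕ) : Equiv.Perm (Fin n) :=
  ((S.sort (· ≤ ·)).map (adjT n)).prod

lemma gfree_mem {m : ℕ} {S : Finset ℕ} (h : S ∈ gfree m) :
    (∀ i ∈ S, i < m) ∧ ∀ i ∈ S, i + 1 ∉ S := by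
  simp only [gfree, Finset.mem_filter, Finset.mem_powerset] at h
  exact ⟨fun i hi => Finset.mem_range.mp (h.1 hi), h.2⟩

lemma sort_far {m : ℕ} {S : Finset ℕ} (h : S ∈ gfree m) :
    (S.sort (· ≤ ·)).Pairwise (fun i j => i + 2 ≤ j ∨ j + 2 ≤ i) := by
  have hs : (S.sort (· ≤ ·)).Pairwise (· < ·) := (Finset.sortedLT_sort S).pairwise
  refine hs.imp_of_mem ?_
  intro a b hab hbb hlt
  left
  have haS : a ∈ S := (Finset.mem_sort _).mp hab
  have hbS : b ∈ S := (Finset.mem_sort _).mp hbb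
  have : b ≠ a + 1 := fun he => (gfree_mem h).2 a haS (he ▸ hbS)
  omega

lemma sort_bound {n : ℕ} {S : Finset ℕ} (h : S ∈ gfree (n - 1)) :
    ∀ i ∈ S.sort (· ≤ ·), i + 1 < n := by
  intro i hi
  have := (gfree_mem h).1 i ((Finset.mem_sort _).mp hi)
  omega

lemma Fperm_apply {n : ℕ} {S : Finset ℕ} (h : S ∈ gfree (n - 1)) (k : Fin n) :
    ((Fperm n S) k : ℕ) = fval (S.sort (· ≤ ·)) (k : ℕ) :=
  adjT_prod_apply n _ (sort_bound h) (sort_far h) k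

lemma Fperm_mem_Zset {n : ℕ} {S : Finset ℕ} (h : S ∈ gfree (n - 1)) :
    Fperm n S ∈ Zset n :=
  ⟨S.sort (· ≤ ·), sort_bound h, sort_far h, rfl⟩

lemma mem_of_Fperm {n : ℕ} {S : Finset ℕ} (h : S ∈ gfree (n - 1)) {i : ℕ} (hi : i + 1 < n) :
    i ∈ S ↔ ((Fperm n S) ⟨i, by omega⟩ : ℕ) = i + 1 := by
  rw [Fperm_apply h]
  simp only [fval]
  constructor
  · intro hmem
    rw [if_pos ((Finset.mem_sort _).mpr hmem)]
  · intro he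
    by_contra hns
    rw [if_neg (fun hc => hns ((Finset.mem_sort _).mp hc))] at he
    split_ifs at he <;> omega

lemma Fperm_injOn (n : ℕ) : Set.InjOn (Fperm n) (gfree (n - 1)) := by
  intro S hS T hT he
  ext i
  constructor
  · intro hiS
    have hi : i + 1 < n := by have := (gfree_mem hS).1 i hiS; omega
    rw [mem_of_Fperm hT hi, ← he, ← mem_of_Fperm hS hi]
    exact hiS
  · intro hiT
    have hi : i + 1 < n := by have := (gfree_mem hT).1 i hiT; omega
    rw [mem_of_Fperm hS hi, he, ← mem_of_Fperm hT hi]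
    exact hiT

lemma Zset_eq_image (n : ℕ) : Zset n = ↑((gfree (n - 1)).image (Fperm n)) := by
  ext w
  simp only [Finset.coe_image, Set.mem_image, Finset.mem_coe]
  constructor
  · rintro ⟨l, hl1, hl2, rfl⟩
    refine ⟨l.toFinset, ?_, ?_⟩
    · simp only [gfree, Finset.mem_filter, Finset.mem_powerset]
      constructor
      · intro i hi
        rw [List.mem_toFinset] at hi
        exact Finset.mem_range.mpr (by have := hl1 i hi; omega)
      · intro i hi hi1
        rw [List.mem_toFinset] at hi hi1
        have hsym : Symmetric (fun i j : ℕ => i + 2 ≤ j ∨ j + 2 ≤ i) := by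
          intro a b hab; tauto
        have := (haveI : Std.Symm (fun i j : ℕ => i + 2 ≤ j ∨ j + 2 ≤ i) := ⟨fun a b h => hsym h⟩; hl2.forall)
        have := this hi hi1 (by omega)
        omega
    · -- Fperm n l.toFinset = prod
      have hmemS : l.toFinset ∈ gfree (n - 1) := by
        simp only [gfree, Finset.mem_filter, Finset.mem_powerset]
        constructor
        · intro i hi
          rw [List.mem_toFinset] at hi
          exact Finset.mem_range.mpr (by have := hl1 i hi; omega)
        · intro i hi hi1
          rw [List.mem_toFinset] at hi hi1
          have hsym : Symmetric (fun i j : ℕ => i + 2 ≤ j ∨ j + 2 ≤ i) := by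
            intro a b hab; tauto
          have := (haveI : Std.Symm (fun i j : ℕ => i + 2 ≤ j ∨ j + 2 ≤ i) := ⟨fun a b h => hsym h⟩; hl2.forall) hi hi1 (by omega)
          omega
      refine Equiv.ext fun k => Fin.val_injective ?_
      rw [Fperm_apply hmemS, adjT_prod_apply n l hl1 hl2 k]
      exact fval_congr _ _ (fun x => by
        rw [Finset.mem_sort, List.mem_toFinset]) _
  · rintro ⟨S, hS, rfl⟩
    exact Fperm_mem_Zset hS

lemma Zset_ncard (n : ℕ) : (Zset n).ncard = (gfree (n - 1)).card := by
  rw [Zset_eq_image n, Set.ncard_coe_finset, Finset.card_image_of_injOn (Fperm_injOn n)]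

lemma gfree_card_rec (m : ℕ) :
    (gfree (m + 2)).card = (gfree (m + 1)).card + (gfree m).card := by
  classical
  rw [← Finset.card_filter_add_card_filter_not
    (p := fun S => (m + 1) ∉ S) (s := gfree (m + 2))]
  congr 1
  · -- sets not containing m+1 : equal gfree (m+1)
    apply Finset.card_bij (fun S _ => S)
    · intro S hS
      simp only [Finset.mem_filter] at hS
      obtain ⟨hSg, hnm⟩ := hS
      obtain ⟨hb, hadj⟩ := gfree_mem hSg
      simp only [gfree, Finset.mem_filter, Finset.mem_powerset]
      refine ⟨fun i hi => Finset.mem_range.mpr ?_, hadj⟩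
      have := hb i hi
      rcases Nat.lt_or_ge i (m + 1) with h | h
      · exact h
      · exfalso; have : i = m + 1 := by omega
        exact hnm (this ▸ hi)
    · intro S _ T _ h; exact h
    · intro T hT
      refine ⟨T, ?_, rfl⟩
      obtain ⟨hb, hadj⟩ := gfree_mem hT
      simp only [Finset.mem_filter, gfree, Finset.mem_powerset]
      refine ⟨⟨?_, hadj⟩, fun hc => by have := hb _ hc; omega⟩
      exact fun i hi => Finset.mem_range.mpr (by have := hb i hi; omega)
  · -- sets containing m+1 : bijection with gfree m via erase
    apply Finset.card_bij (fun S _ => S.erase (m + 1))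
    · intro S hS
      simp only [Finset.mem_filter, not_not] at hS
      obtain ⟨hSg, hm1⟩ := hS
      obtain ⟨hb, hadj⟩ := gfree_mem hSg
      simp only [gfree, Finset.mem_filter, Finset.mem_powerset]
      constructor
      · intro i hi
        rw [Finset.mem_erase] at hi
        refine Finset.mem_range.mpr ?_
        have h1 := hb i hi.2
        have h2 : i ≠ m + 1 := hi.1
        have h3 : i ≠ m := fun he => hadj i hi.2 (by rw [he]; exact hm1)
        omega
      · intro i hi
        rw [Finset.mem_erase] at hi
        intro hc
        rw [Finset.mem_erase] at hc
        exact hadj i hi.2 hc.2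
    · intro S hS T hT h
      simp only [Finset.mem_filter, not_not] at hS hT
      have : insert (m + 1) (S.erase (m + 1)) = insert (m + 1) (T.erase (m + 1)) := by rw [h]
      rwa [Finset.insert_erase hS.2, Finset.insert_erase hT.2] at this
    · intro T hT
      obtain ⟨hb, hadj⟩ := gfree_mem hT
      refine ⟨insert (m + 1) T, ?_, ?_⟩
      · simp only [Finset.mem_filter, not_not, gfree, Finset.mem_powerset]
        refine ⟨⟨?_, ?_⟩, Finset.mem_insert_self _ _⟩
        · intro i hi
          rcases Finset.mem_insert.mp hi with h | h
          · exact Finset.mem_range.mpr (by omega)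
          · exact Finset.mem_range.mpr (by have := hb i h; omega)
        · intro i hi hc
          rcases Finset.mem_insert.mp hi with h | h
          · rcases Finset.mem_insert.mp hc with h' | h'
            · omega
            · have := hb _ h'; omega
          · rcases Finset.mem_insert.mp hc with h' | h'
            · have := hb _ h; omega
            · exact hadj i h h'
      · rw [Finset.erase_insert (fun hc => by have := hb _ hc; omega)]

private theorem stmt1_aux (n : ℕ) (hn : 3 ≤ n) :
    (Zset n).ncard = (Zset (n - 1)).ncard + (Zset (n - 2)).ncard := by
  obtain ⟨m, rfl⟩ : ∃ m, n = m + 3 := ⟨n - 3, by omega⟩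
  have e1 : m + 3 - 1 = m + 2 := by omega
  have e2 : m + 3 - 2 = m + 1 := by omega
  rw [Zset_ncard, Zset_ncard, Zset_ncard, e1, e2]
  simp only [Nat.add_sub_cancel]
  exact gfree_card_rec m

theorem stmt1 (n : ℕ) (hn : 3 ≤ n) :
    (Zset n).ncard = (Zset (n - 1)).ncard + (Zset (n - 2)).ncard := stmt1_aux n hn
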